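/- The space c of convergent real sequences admits an Auerbach basis (xⱼ; xⱼ*)_{j≥0} with x₀ being the constant sequence 1. -/

import Mathlib

open scoped ENNReal
set_option synthInstance.maxHeartbeats 1000000
set_option maxHeartbeats 1000000

/-- The space of `X`-valued convergent sequences, as a subspace of `ℓ^∞(X)` (with the
sup norm). -/
noncomputable def cSubX (X : Type*) [NormedAddCommGroup X] [NormedSpace ℝ X] :
    Submodule ℝ (lp (fun _ : ℕ => X) ∞) where
  carrier := {y | ∃ L : X, Filter.Tendsto (fun n => y n) Filter.atTop (nhds L)}
  zero_mem' := ⟨0, by simp⟩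
  add_mem' := by
    rintro y z ⟨L1, h1⟩ ⟨L2, h2⟩
    refine ⟨L1 + L2, ?_⟩
    have := h1.add h2
    simpa [lp.coeFn_add] using this
  smul_mem' := by
    rintro c y ⟨L, h⟩
    refine ⟨c • L, ?_⟩
    have := h.const_smul c
    simpa [lp.coeFn_smul] using this

/-- The space `c` of convergent real sequences with the sup norm. -/
noncomputable abbrev cSub : Submodule ℝ (lp (fun _ : ℕ => ℝ) ∞) := cSubX ℝ

/-- An Auerbach basis of a normed space: a biorthogonal system of norm-one vectors and
norm-one functionals which is fundamental (the closed linear span of the vectors is the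
whole space) and total (the functionals separate points). -/
structure IsAuerbachBasis {X : Type*} [NormedAddCommGroup X] [NormedSpace ℝ X]
    {ι : Type*} (x : ι → X) (f : ι → X →L[ℝ] ℝ) : Prop where
  biorth_eq : ∀ k, f k (x k) = 1
  biorth_ne : ∀ k j, k ≠ j → f k (x j) = 0
  norm_vec : ∀ n, ‖x n‖ = 1
  norm_fun : ∀ n, ‖f n‖ = 1
  fundamental : (Submodule.span ℝ (Set.range x)).topologicalClosure = ⊤
  total : ∀ y, (∀ n, f n y = 0) → y = 0

namespace AuerbachC

def xf (j n : ℕ) : ℝ := if n < j then -1 else 1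

lemma xf_norm (j n : ℕ) : ‖xf j n‖ = 1 := by unfold xf; split <;> simp

lemma xf_tendsto (j : ℕ) : Filter.Tendsto (xf j) Filter.atTop (nhds (1:ℝ)) := by
  refine Filter.Tendsto.congr' ?_ tendsto_const_nhds
  filter_upwards [Filter.eventually_ge_atTop j] with n hn
  simp [xf, Nat.not_lt.mpr hn]

noncomputable def xlp (j : ℕ) : lp (fun _ : ℕ => ℝ) ∞ :=
  ⟨xf j, memℓp_infty ⟨1, by rintro r ⟨n, rfl⟩; exact le_of_eq (xf_norm j n)⟩⟩

@[simp] lemma xlp_apply (j n : ℕ) : (xlp j : ∀ _ : ℕ, ℝ) n = xf j n := rfl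

noncomputable def xc (j : ℕ) : cSub := ⟨xlp j, ⟨1, xf_tendsto j⟩⟩

lemma norm_xc (j : ℕ) : ‖xc j‖ = 1 := by
  have h1 : ‖xc j‖ ≤ 1 := lp.norm_le_of_forall_le zero_le_one fun n => le_of_eq (xf_norm j n)
  have h2 : (1:ℝ) ≤ ‖xc j‖ := by
    have := lp.norm_apply_le_norm ENNReal.top_ne_zero (xlp j) j
    rw [show ‖xc j‖ = ‖xlp j‖ from rfl]
    simpa [xf] using this
  linarith

end AuerbachC

namespace AuerbachC

lemma mem_cSub_iff {v : lp (fun _ : ℕ => ℝ) ∞} :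
    v ∈ cSub ↔ ∃ L : ℝ, Filter.Tendsto (fun n => v n) Filter.atTop (nhds L) := Iff.rfl

/-- evaluation functional -/
noncomputable def evC (n : ℕ) : cSub →L[ℝ] ℝ :=
  LinearMap.mkContinuous
    { toFun := fun y => (y : lp (fun _ : ℕ => ℝ) ∞) n
      map_add' := fun y z => rfl
      map_smul' := fun c y => rfl }
    1 (fun y => by
      rw [one_mul]; exact lp.norm_apply_le_norm ENNReal.top_ne_zero (y : lp (fun _ : ℕ => ℝ) ∞) n)

@[simp] lemma evC_apply (n : ℕ) (y : cSub) : evC n y = (y : lp (fun _ : ℕ => ℝ) ∞) n := rfl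

lemma norm_evC_le (n : ℕ) : ‖evC n‖ ≤ 1 :=
  LinearMap.mkContinuous_norm_le _ zero_le_one _

noncomputable def limSeq (y : cSub) : ℝ := (mem_cSub_iff.mp y.2).choose

lemma tendsto_limSeq (y : cSub) :
    Filter.Tendsto (fun n => (y : lp (fun _ : ℕ => ℝ) ∞) n) Filter.atTop (nhds (limSeq y)) :=
  (mem_cSub_iff.mp y.2).choose_spec

lemma limSeq_eq {y : cSub} {L : ℝ}
    (h : Filter.Tendsto (fun n => (y : lp (fun _ : ℕ => ℝ) ∞) n) Filter.atTop (nhds L)) :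
    limSeq y = L := tendsto_nhds_unique (tendsto_limSeq y) h

lemma abs_limSeq_le (y : cSub) : |limSeq y| ≤ ‖y‖ := by
  have h := (tendsto_limSeq y).abs
  refine le_of_tendsto h (Filter.Eventually.of_forall fun n => ?_)
  simpa using lp.norm_apply_le_norm ENNReal.top_ne_zero (y : lp (fun _ : ℕ => ℝ) ∞) n

/-- the limit functional -/
noncomputable def limC : cSub →L[ℝ] ℝ :=
  LinearMap.mkContinuous
    { toFun := limSeq
      map_add' := fun y z => by
        refine limSeq_eq ?_
        have : ((y + z : cSub) : lp (fun _ : ℕ => ℝ) ∞) = (y : lp (fun _ : ℕ => ℝ) ∞) + z := rfl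
        have h2 := (tendsto_limSeq y).add (tendsto_limSeq z)
        refine h2.congr fun n => ?_
        rw [this, lp.coeFn_add]; rfl
      map_smul' := fun c y => by
        refine limSeq_eq ?_
        have : ((c • y : cSub) : lp (fun _ : ℕ => ℝ) ∞) = c • (y : lp (fun _ : ℕ => ℝ) ∞) := rfl
        have h2 := (tendsto_limSeq y).const_mul c
        refine h2.congr fun n => ?_
        rw [this, lp.coeFn_smul]; rfl }
    1 (fun y => by simpa using abs_limSeq_le y)

@[simp] lemma limC_apply (y : cSub) : limC y = limSeq y := rfl

lemma norm_limC_le : ‖limC‖ ≤ 1 := LinearMap.mkContinuous_norm_le _ zero_le_one _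

lemma limSeq_xc (j : ℕ) : limSeq (xc j) = 1 := limSeq_eq (xf_tendsto j)

/-- the functionals -/
noncomputable def fc : ℕ → cSub →L[ℝ] ℝ
  | 0 => (2:ℝ)⁻¹ • (evC 0 + limC)
  | (j+1) => (2:ℝ)⁻¹ • (evC (j+1) - evC j)

end AuerbachC

namespace AuerbachC

lemma evC_xc (n j : ℕ) : evC n (xc j) = xf j n := rfl

lemma fc_xc (k j : ℕ) : fc k (xc j) = if k = j then 1 else 0 := by
  match k with
  | 0 =>
    simp only [fc, ContinuousLinearMap.smul_apply, ContinuousLinearMap.add_apply,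
      evC_apply, limC_apply, limSeq_xc]
    have : (xc j : lp (fun _ : ℕ => ℝ) ∞) 0 = xf j 0 := rfl
    rw [this]
    rcases Nat.eq_zero_or_pos j with h | h
    · subst h; norm_num [xf]
    · rw [if_neg (by omega)]
      simp [xf, h]
  | (k+1) =>
    simp only [fc, ContinuousLinearMap.smul_apply, ContinuousLinearMap.sub_apply, evC_apply]
    have h1 : (xc j : lp (fun _ : ℕ => ℝ) ∞) (k+1) = xf j (k+1) := rfl
    have h2 : (xc j : lp (fun _ : ℕ => ℝ) ∞) k = xf j k := rfl
    rw [h1, h2]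
    by_cases h : k + 1 = j
    · subst h
      norm_num [xf]
    · rw [if_neg h]
      have : xf j (k+1) = xf j k := by
        unfold xf
        rcases Nat.lt_or_ge k j with h' | h'
        · rw [if_pos h', if_pos (by omega)]
        · rw [if_neg (by omega), if_neg (by omega)]
      rw [this, sub_self, smul_zero]

lemma norm_fc (k : ℕ) : ‖fc k‖ = 1 := by
  have hle : ‖fc k‖ ≤ 1 := by
    refine ContinuousLinearMap.opNorm_le_bound _ zero_le_one fun y => ?_
    have hy : ∀ n, |(y : lp (fun _ : ℕ => ℝ) ∞) n| ≤ ‖y‖ := fun n => by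
      simpa using lp.norm_apply_le_norm ENNReal.top_ne_zero (y : lp (fun _ : ℕ => ℝ) ∞) n
    have hl := abs_limSeq_le y
    rw [one_mul, Real.norm_eq_abs]
    match k with
    | 0 =>
      rw [show fc 0 y = 2⁻¹ * ((y : lp (fun _ : ℕ => ℝ) ∞) 0 + limSeq y) from rfl, abs_mul]
      have habs := abs_add_le ((y : lp (fun _ : ℕ => ℝ) ∞) 0) (limSeq y)
      have h0 := hy 0
      rw [show |(2:ℝ)⁻¹| = 2⁻¹ by norm_num]
      linarith
    | (j+1) =>
      rw [show fc (j+1) y =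
          2⁻¹ * ((y : lp (fun _ : ℕ => ℝ) ∞) (j+1) - (y : lp (fun _ : ℕ => ℝ) ∞) j) from rfl,
        abs_mul]
      have habs := abs_sub ((y : lp (fun _ : ℕ => ℝ) ∞) (j+1)) ((y : lp (fun _ : ℕ => ℝ) ∞) j)
      have h0 := hy (j+1); have h1 := hy j
      rw [show |(2:ℝ)⁻¹| = 2⁻¹ by norm_num]
      linarith
  have hge : (1:ℝ) ≤ ‖fc k‖ := by
    have h1 : fc k (xc k) = 1 := by rw [fc_xc]; simp
    have := (fc k).le_opNorm (xc k)
    rw [h1, norm_xc, mul_one] at this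
    simpa using this
  linarith

end AuerbachC

namespace AuerbachC

lemma total' (y : cSub) (h : ∀ n, fc n y = 0) : y = 0 := by
  have hstep : ∀ j, (y : lp (fun _ : ℕ => ℝ) ∞) (j+1) = (y : lp (fun _ : ℕ => ℝ) ∞) j := by
    intro j
    have h1 := h (j+1)
    rw [show fc (j+1) y =
        2⁻¹ * ((y : lp (fun _ : ℕ => ℝ) ∞) (j+1) - (y : lp (fun _ : ℕ => ℝ) ∞) j) from rfl] at h1
    have := mul_eq_zero.mp h1
    rcases this with h2 | h2
    · norm_num at h2
    · linarith [sub_eq_zero.mp h2]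
  have hconst : ∀ n, (y : lp (fun _ : ℕ => ℝ) ∞) n = (y : lp (fun _ : ℕ => ℝ) ∞) 0 := by
    intro n
    induction n with
    | zero => rfl
    | succ k ih => rw [hstep k, ih]
  have hlim : limSeq y = (y : lp (fun _ : ℕ => ℝ) ∞) 0 := by
    refine limSeq_eq ?_
    exact Filter.Tendsto.congr (fun n => (hconst n).symm) tendsto_const_nhds
  have h0 := h 0
  rw [show fc 0 y = 2⁻¹ * ((y : lp (fun _ : ℕ => ℝ) ∞) 0 + limSeq y) from rfl, hlim] at h0
  have hy0 : (y : lp (fun _ : ℕ => ℝ) ∞) 0 = 0 := by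
    rcases mul_eq_zero.mp h0 with h2 | h2
    · norm_num at h2
    · linarith
  refine Subtype.ext (lp.ext (funext fun n => ?_))
  rw [hconst n, hy0]; rfl

lemma xf_diff (m n : ℕ) : xf m n - xf (m+1) n = if n = m then 2 else 0 := by
  simp only [xf]
  split_ifs <;> first | omega | norm_num

lemma fundamental' : (Submodule.span ℝ (Set.range xc)).topologicalClosure = ⊤ := by
  rw [Submodule.eq_top_iff']
  intro y
  show y ∈ closure ((Submodule.span ℝ (Set.range xc) : Set cSub))
  refine Metric.mem_closure_iff.mpr fun ε hε => ?_
  set L := limSeq y with hL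
  obtain ⟨N, hN⟩ := Metric.tendsto_atTop.mp (tendsto_limSeq y) (ε/2) (by linarith)
  set z : cSub := L • xc 0 +
      ∑ m ∈ Finset.range N, (((y : lp (fun _ : ℕ => ℝ) ∞) m - L) * 2⁻¹) • (xc m - xc (m+1))
    with hz
  have hzmem : z ∈ Submodule.span ℝ (Set.range xc) := by
    refine Submodule.add_mem _ (Submodule.smul_mem _ _ (Submodule.subset_span ⟨0, rfl⟩)) ?_
    refine Submodule.sum_mem _ fun m _ => Submodule.smul_mem _ _ ?_
    exact Submodule.sub_mem _ (Submodule.subset_span ⟨m, rfl⟩)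
      (Submodule.subset_span ⟨m+1, rfl⟩)
  have hzcoord : ∀ n, (z : lp (fun _ : ℕ => ℝ) ∞) n =
      if n < N then (y : lp (fun _ : ℕ => ℝ) ∞) n else L := by
    intro n
    have : (z : lp (fun _ : ℕ => ℝ) ∞) n = evC n z := rfl
    rw [this, hz]
    rw [map_add, map_smul, map_sum]
    simp only [map_smul, map_sub, evC_xc, smul_eq_mul]
    rw [show xf 0 n = 1 by simp [xf]]
    simp only [xf_diff, mul_ite, mul_zero, Finset.sum_ite_eq, Finset.mem_range]
    split_ifs with hn
    · ring
    · ring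
  refine ⟨z, hzmem, ?_⟩
  rw [dist_eq_norm]
  have hb : ∀ n, ‖((y - z : cSub) : lp (fun _ : ℕ => ℝ) ∞) n‖ ≤ ε/2 := by
    intro n
    have hc : ((y - z : cSub) : lp (fun _ : ℕ => ℝ) ∞) n =
        (y : lp (fun _ : ℕ => ℝ) ∞) n - (z : lp (fun _ : ℕ => ℝ) ∞) n := rfl
    rw [hc, hzcoord n]
    split_ifs with hn
    · simp; linarith
    · have := hN n (by omega)
      rw [Real.dist_eq] at this
      rw [Real.norm_eq_abs]
      linarith
  have : ‖y - z‖ ≤ ε/2 := lp.norm_le_of_forall_le (by linarith) hb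
  linarith

end AuerbachC


/-- The space `c` of convergent real sequences admits an Auerbach basis
`(xⱼ; xⱼ^*)_{j ≥ 0}` with `x₀` the constant sequence `1`. -/
theorem stmt12 :
    ∃ (x : ℕ → cSub) (f : ℕ → cSub →L[ℝ] ℝ),
      IsAuerbachBasis x f ∧ ∀ k : ℕ, (x 0 : lp (fun _ : ℕ => ℝ) ∞) k = 1 := by
  refine ⟨AuerbachC.xc, AuerbachC.fc,
    ⟨?_, ?_, AuerbachC.norm_xc, AuerbachC.norm_fc, AuerbachC.fundamental', AuerbachC.total'⟩,
    fun k => ?_⟩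
  · intro k; rw [AuerbachC.fc_xc]; simp
  · intro k j hkj; rw [AuerbachC.fc_xc, if_neg hkj]
  · show AuerbachC.xf 0 k = 1
    simp [AuerbachC.xf]
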